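/- Let h₊ be the discrete Dirichlet Laplacian on ℓ²(ℕ). For real x with |x| > 2 and all m, n ≥ 0, ⟨δ_m, (h₊ - x)⁻¹ δ_n⟩ = ζ₁(x)/(ζ₁(x)² - 1) · (ζ₁(x)^{|m-n|} - ζ₁(x)^{m+n+2}), where ζ₁(x) = (x/2)(1 - √(1-4/x²)). -/

import Mathlib

noncomputable def zeta1 (x : ℝ) : ℝ := x / 2 * (1 - Real.sqrt (1 - 4 / x ^ 2))

noncomputable abbrev L2 := lp (fun _ : ℕ => ℂ) 2

set_option maxHeartbeats 1600000 in
/-- Full matrix elements of the resolvent of the half-line Dirichlet Laplacian: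
`⟨δ_m, (h₊ - x)⁻¹ δ_n⟩ = ζ₁/(ζ₁²-1) · (ζ₁^{|m-n|} - ζ₁^{m+n+2})` for `|x| > 2`. -/
theorem stmt3 (H : L2 →L[ℂ] L2)
    (hH0 : ∀ u : L2, (H u : ∀ _ : ℕ, ℂ) 0 = (u : ∀ _ : ℕ, ℂ) 1)
    (hHn : ∀ u : L2, ∀ n : ℕ,
      (H u : ∀ _ : ℕ, ℂ) (n + 1) = (u : ∀ _ : ℕ, ℂ) (n + 2) + (u : ∀ _ : ℕ, ℂ) n)
    (x : ℝ) (hx : 2 < |x|)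
    (R : L2 →L[ℂ] L2)
    (hR1 : (H - (x : ℂ) • 1) * R = 1) (hR2 : R * (H - (x : ℂ) • 1) = 1)
    (m n : ℕ) :
    (inner ℂ (lp.single 2 m (1 : ℂ)) (R (lp.single 2 n (1 : ℂ))) : ℂ)
      = ((zeta1 x / ((zeta1 x) ^ 2 - 1) *
          ((zeta1 x) ^ ((m : ℤ) - n).natAbs - (zeta1 x) ^ (m + n + 2)) : ℝ) : ℂ) := by
  have hx0 : x ≠ 0 := by
    intro h; rw [h, abs_zero] at hx; linarith
  have hx4 : 4 < x ^ 2 := by nlinarith [abs_nonneg x, sq_abs x]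
  set z := zeta1 x with hzdef
  set s := Real.sqrt (1 - 4 / x ^ 2) with hsdef
  have hsnn : 0 ≤ s := Real.sqrt_nonneg _
  have harg : 0 ≤ 1 - 4 / x ^ 2 := by
    have h1 : 4 / x ^ 2 < 1 := (div_lt_one (by positivity)).2 hx4
    linarith
  have hs2 : s ^ 2 = 1 - 4 / x ^ 2 := Real.sq_sqrt harg
  have hs2' : s ^ 2 * x ^ 2 = x ^ 2 - 4 := by
    rw [hs2]; field_simp
  have hzval : z = x / 2 * (1 - s) := by rw [hzdef]; rfl
  have hq : z ^ 2 - x * z + 1 = 0 := by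
    rw [hzval]; linear_combination hs2' / 4
  have hmul : z * (x / 2 * (1 + s)) = 1 := by
    rw [hzval]; linear_combination (-1 / 4) * hs2'
  have hz0 : z ≠ 0 := left_ne_zero_of_mul_eq_one hmul
  have habs : |z| < 1 := by
    have h1 : |z| * |x / 2 * (1 + s)| = 1 := by rw [← abs_mul, hmul, abs_one]
    have h2 : 1 < |x / 2 * (1 + s)| := by
      rw [abs_mul, abs_of_pos (by linarith : (0 : ℝ) < 1 + s), abs_div, abs_two]
      nlinarith [hsnn, hx]
    nlinarith [mul_pos (abs_pos.2 hz0) (sub_pos.2 h2), h1]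
  -- complex versions
  set w : ℂ := (z : ℂ) with hwdef
  have hqC : w ^ 2 - (x : ℂ) * w + 1 = 0 := by
    have := congrArg (fun t : ℝ => (t : ℂ)) hq
    push_cast at this
    linear_combination this
  have hwn : ‖w‖ = |z| := by rw [hwdef, Complex.norm_real, Real.norm_eq_abs]
  have hw1 : ‖w‖ < 1 := by rw [hwn]; exact habs
  have hw0 : w ≠ 0 := by
    rw [hwdef]; exact_mod_cast hz0
  have hwsq : w ^ 2 - 1 ≠ 0 := by
    intro h
    have h1 : w ^ 2 = 1 := sub_eq_zero.mp h
    have h2 := congrArg norm h1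
    rw [norm_pow, norm_one] at h2
    nlinarith [hw1, norm_nonneg w]
  set c : ℂ := w / (w ^ 2 - 1) with hcdef
  have hc : c * (w ^ 2 - 1) = w := div_mul_cancel₀ _ hwsq
  have hcw : c * (2 * w - (x : ℂ)) = 1 :=
    mul_left_cancel₀ hw0 (by linear_combination hc + c * hqC :
      w * (c * (2 * w - (x : ℂ))) = w * 1)
  -- the candidate solution
  set g : ℕ → ℂ := fun k => c * (w ^ ((k : ℤ) - n).natAbs - w ^ (k + n + 2)) with hgdef
  set r : ℝ := |z| with hrdef
  have hr0 : 0 < r := abs_pos.2 hz0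
  have hr1 : r < 1 := habs
  have hbound : ∀ k, ‖g k‖ ≤ (‖c‖ * (1 / r ^ n + 1)) * r ^ k := by
    intro k
    have h1 : ‖w ^ ((k : ℤ) - n).natAbs‖ = r ^ ((k : ℤ) - n).natAbs := by
      rw [norm_pow, hwn]
    have h2 : ‖w ^ (k + n + 2)‖ = r ^ (k + n + 2) := by rw [norm_pow, hwn]
    have e1 : r ^ ((k : ℤ) - n).natAbs ≤ r ^ k / r ^ n := by
      rw [le_div_iff₀ (by positivity), ← pow_add]
      exact pow_le_pow_of_le_one hr0.le hr1.le (by omega)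
    have e2 : r ^ (k + n + 2) ≤ r ^ k := pow_le_pow_of_le_one hr0.le hr1.le (by omega)
    calc ‖g k‖ ≤ ‖c‖ * (‖w ^ ((k : ℤ) - n).natAbs‖ + ‖w ^ (k + n + 2)‖) := by
          rw [hgdef]
          exact (norm_mul_le _ _).trans (by
            gcongr
            exact norm_sub_le _ _)
      _ ≤ ‖c‖ * (r ^ k / r ^ n + r ^ k) := by
          rw [h1, h2]; gcongr
      _ = (‖c‖ * (1 / r ^ n + 1)) * r ^ k := by ring
  have hg : Memℓp g 2 := by
    have hsum0 : Summable fun k : ℕ => (r ^ 2) ^ k :=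
      summable_geometric_of_lt_one (by positivity) (by nlinarith)
    have hsum1 : Summable fun k : ℕ => (‖c‖ * (1 / r ^ n + 1)) ^ 2 * (r ^ 2) ^ k :=
      hsum0.mul_left _
    have hle : ∀ k : ℕ, ‖g k‖ ^ (2 : ℕ) ≤ (‖c‖ * (1 / r ^ n + 1)) ^ 2 * (r ^ 2) ^ k := by
      intro k
      calc ‖g k‖ ^ 2 ≤ ((‖c‖ * (1 / r ^ n + 1)) * r ^ k) ^ 2 := by
            exact pow_le_pow_left₀ (norm_nonneg _) (hbound k) 2
        _ = (‖c‖ * (1 / r ^ n + 1)) ^ 2 * (r ^ 2) ^ k := by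
            rw [mul_pow, ← pow_mul, ← pow_mul, mul_comm 2 k]
    have hsum2 : Summable fun k : ℕ => ‖g k‖ ^ (2 : ℕ) :=
      Summable.of_nonneg_of_le (fun k => by positivity) hle hsum1
    apply memℓp_gen
    have h2 : ((2 : ENNReal)).toReal = ((2 : ℕ) : ℝ) := by norm_num
    simp only [h2, Real.rpow_natCast]
    exact hsum2
  set v : L2 := ⟨g, hg⟩ with hvdef
  have hv : ∀ k, (v : ∀ _ : ℕ, ℂ) k = g k := fun _ => rfl
  have hsub : ∀ (u : L2) (k : ℕ), ((H - (x : ℂ) • 1) u : ∀ _ : ℕ, ℂ) k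
      = (H u : ∀ _ : ℕ, ℂ) k - (x : ℂ) * (u : ∀ _ : ℕ, ℂ) k := by
    intro u k
    rw [ContinuousLinearMap.sub_apply, ContinuousLinearMap.smul_apply,
      ContinuousLinearMap.one_apply, lp.coeFn_sub, Pi.sub_apply, lp.coeFn_smul,
      Pi.smul_apply, smul_eq_mul]
  have hkey : (H - (x : ℂ) • 1) v = lp.single 2 n 1 := by
    apply lp.ext
    funext k
    rw [hsub]
    cases k with
    | zero =>
      rw [hH0 v, hv, hv]
      cases n with
      | zero =>
        rw [lp.single_apply_self]
        simp only [hgdef]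
        norm_num
        linear_combination ((x : ℂ) - w) * hc - hqC
      | succ n' =>
        rw [lp.single_apply_ne 2 _ _ (by omega : (0 : ℕ) ≠ n' + 1)]
        simp only [hgdef]
        have e1 : (((1 : ℕ) : ℤ) - ((n' + 1 : ℕ) : ℤ)).natAbs = n' := by omega
        have e2 : (((0 : ℕ) : ℤ) - ((n' + 1 : ℕ) : ℤ)).natAbs = n' + 1 := by omega
        rw [e1, e2]
        have e3 : 1 + (n' + 1) + 2 = n' + 4 := by omega
        have e4 : 0 + (n' + 1) + 2 = n' + 3 := by omega
        rw [e3, e4]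
        linear_combination (c * w ^ n' - c * w ^ (n' + 2)) * hqC
    | succ k =>
      rw [hHn v k, hv, hv, hv]
      simp only [hgdef]
      rcases lt_trichotomy (k + 1) n with h | h | h
      · rw [lp.single_apply_ne 2 _ _ (by omega : k + 1 ≠ n)]
        set a : ℕ := n - (k + 2) with hadef
        set b : ℕ := k + n + 2 with hbdef
        have e1 : (((k + 2 : ℕ) : ℤ) - (n : ℤ)).natAbs = a := by omega
        have e2 : (((k : ℕ) : ℤ) - (n : ℤ)).natAbs = a + 2 := by omega
        have e3 : (((k + 1 : ℕ) : ℤ) - (n : ℤ)).natAbs = a + 1 := by omega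
        have e4 : k + 2 + n + 2 = b + 2 := by omega
        have e5 : k + 1 + n + 2 = b + 1 := by omega
        rw [e1, e2, e3, e4, e5]
        linear_combination (c * w ^ a - c * w ^ b) * hqC
      · subst h
        rw [lp.single_apply_self]
        have e1 : (((k + 2 : ℕ) : ℤ) - ((k + 1 : ℕ) : ℤ)).natAbs = 1 := by omega
        have e2 : (((k : ℕ) : ℤ) - ((k + 1 : ℕ) : ℤ)).natAbs = 1 := by omega
        have e3 : (((k + 1 : ℕ) : ℤ) - ((k + 1 : ℕ) : ℤ)).natAbs = 0 := by omega
        rw [e1, e2, e3]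
        have e4 : k + 2 + (k + 1) + 2 = 2 * k + 5 := by omega
        have e5 : k + (k + 1) + 2 = 2 * k + 3 := by omega
        have e6 : k + 1 + (k + 1) + 2 = 2 * k + 4 := by omega
        rw [e4, e5, e6]
        linear_combination hcw - (c * w ^ (2 * k + 3)) * hqC
      · rw [lp.single_apply_ne 2 _ _ (by omega : k + 1 ≠ n)]
        set a : ℕ := k - n with hadef
        set b : ℕ := k + n + 2 with hbdef
        have e1 : (((k + 2 : ℕ) : ℤ) - (n : ℤ)).natAbs = a + 2 := by omega
        have e2 : (((k : ℕ) : ℤ) - (n : ℤ)).natAbs = a := by omega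
        have e3 : (((k + 1 : ℕ) : ℤ) - (n : ℤ)).natAbs = a + 1 := by omega
        have e4 : k + 2 + n + 2 = b + 2 := by omega
        have e5 : k + 1 + n + 2 = b + 1 := by omega
        rw [e1, e2, e3, e4, e5]
        linear_combination (c * w ^ a - c * w ^ b) * hqC
  have hRv : R (lp.single 2 n 1) = v := by
    calc R (lp.single 2 n 1) = R ((H - (x : ℂ) • 1) v) := by rw [hkey]
      _ = (R * (H - (x : ℂ) • 1)) v := rfl
      _ = (1 : L2 →L[ℂ] L2) v := by rw [hR2]
      _ = v := rfl
  rw [hRv, lp.inner_single_left]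
  have : (v : ∀ _ : ℕ, ℂ) m = g m := rfl
  rw [this]
  simp only [RCLike.inner_apply, map_one, one_mul, hgdef]
  rw [hwdef, hcdef, hwdef]
  push_cast
  ring
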